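/- For positive integers k and n, lim_{α→0} C(n+α-1, n) · ζ_n({1}_k; α) = ζ_{n-1}({1}_{k-1}) / n, where C(n+α-1,n) = (α)_n/n!, ζ_n({1}_k; α) = Σ_{n ≥ n_1 > ... > n_k ≥ 1} Π_j 1/(n_j+α-1), and ζ_{n-1}({1}_{k-1}) = Σ_{n-1 ≥ n_1 > ... > n_{k-1} ≥ 1} Π_j 1/n_j. -/

import Mathlib

/-- Pochhammer symbol `(α)_n = α(α+1)⋯(α+n-1)`. -/
noncomputable def poch (α : ℂ) (n : ℕ) : ℂ := ∏ i ∈ Finset.range n, (α + i)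

/-- Generalized binomial coefficient `C(a,b) = Γ(a+1)/(Γ(b+1)Γ(a-b+1))`. -/
noncomputable def cbinom (a b : ℂ) : ℂ :=
  Complex.Gamma (a + 1) / (Complex.Gamma (b + 1) * Complex.Gamma (a - b + 1))

/-- Hurwitz-type multiple harmonic sum `ζ_n({1}_k; a)`. -/
noncomputable def hmhs (a : ℂ) : ℕ → ℕ → ℂ
  | _, 0 => 1
  | n, k + 1 => ∑ j ∈ Finset.Icc 1 n, (1 / ((j : ℂ) + a - 1)) * hmhs a (j - 1) k
  termination_by n k => k

/-- Hurwitz-type multiple harmonic star sum `ζ_n^⋆({1}_k; a)`. -/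
noncomputable def hmhsStar (a : ℂ) : ℕ → ℕ → ℂ
  | _, 0 => 1
  | n, k + 1 => ∑ j ∈ Finset.Icc 1 n, (1 / ((j : ℂ) + a - 1)) * hmhsStar a j k
  termination_by n k => k

/-- Power sum `Σ_{j=1}^n 1/(j+a-1)^s`. -/
noncomputable def psum (a : ℂ) (n s : ℕ) : ℂ := ∑ j ∈ Finset.Icc 1 n, (1 / ((j : ℂ) + a - 1)) ^ s

lemma hmhs_zero_right (a : ℂ) (n : ℕ) : hmhs a n 0 = 1 := by rw [hmhs]

lemma hmhs_succ (a : ℂ) (n k : ℕ) :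
    hmhs a n (k+1) = ∑ j ∈ Finset.Icc 1 n, (1 / ((j : ℂ) + a - 1)) * hmhs a (j - 1) k := by
  rw [hmhs]

lemma hmhs_zero_left (a : ℂ) (k : ℕ) : hmhs a 0 (k+1) = 0 := by rw [hmhs]; simp

lemma hmhs_succ' (a : ℂ) (n k : ℕ) :
    hmhs a n (k+1) = ∑ i ∈ Finset.range n, (1 / (((1+i : ℕ) : ℂ) + a - 1)) * hmhs a i k := by
  rw [hmhs_succ, show Finset.Icc 1 n = Finset.Ico 1 (n+1) from (Finset.Ico_add_one_right_eq_Icc 1 n).symm,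
    Finset.sum_Ico_eq_sum_range]
  simp

/-- Key decomposition: the pole part of `hmhs α (m+1) (k+1)` at `α = 0`. -/
lemma hmhs_key (k : ℕ) : ∀ (m : ℕ) (α : ℂ),
    hmhs α (m+1) (k+1) = hmhs (α+1) m (k+1) + (1/α) * hmhs (α+1) m k := by
  induction k with
  | zero =>
    intro m α
    rw [hmhs_succ', hmhs_succ', hmhs_zero_right, Finset.sum_range_succ']
    simp only [hmhs_zero_right, mul_one]
    congr 1
    · apply Finset.sum_congr rfl
      intro i _
      push_cast; ring_nf
    · push_cast; ring_nf
  | succ k ih =>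
    intro m α
    rw [hmhs_succ' α, Finset.sum_range_succ']
    have h0 : (1 / (((1+0 : ℕ) : ℂ) + α - 1)) * hmhs α 0 (k+1) = 0 := by
      rw [hmhs_zero_left]; ring
    rw [h0, add_zero]
    have hterm : ∀ i ∈ Finset.range m,
        (1 / (((1+(i+1) : ℕ) : ℂ) + α - 1)) * hmhs α (i+1) (k+1)
        = (1 / (((1+i : ℕ) : ℂ) + (α+1) - 1)) * hmhs (α+1) i (k+1)
          + (1/α) * ((1 / (((1+i : ℕ) : ℂ) + (α+1) - 1)) * hmhs (α+1) i k) := by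
      intro i _
      rw [ih i α]
      push_cast
      ring_nf
    rw [Finset.sum_congr rfl hterm, Finset.sum_add_distrib, ← Finset.mul_sum,
      ← hmhs_succ', ← hmhs_succ']

lemma hmhs_tendsto (k : ℕ) : ∀ m : ℕ, Filter.Tendsto (fun α : ℂ => hmhs (α+1) m k)
    (nhds 0) (nhds (hmhs 1 m k)) := by
  induction k with
  | zero => intro m; simp only [hmhs_zero_right]; exact tendsto_const_nhds
  | succ k ih =>
    intro m
    simp only [hmhs_succ]
    apply tendsto_finset_sum
    intro j hj
    have hj1 : 1 ≤ j := (Finset.mem_Icc.mp hj).1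
    have hjne : ((j : ℂ) + 1 - 1) ≠ 0 := by
      have : (j : ℂ) ≠ 0 := Nat.cast_ne_zero.mpr (by omega)
      simpa using this
    apply Filter.Tendsto.mul _ (ih (j-1))
    apply Filter.Tendsto.div tendsto_const_nhds _ hjne
    have : Continuous (fun α : ℂ => (j : ℂ) + (α + 1) - 1) := by fun_prop
    simpa using this.tendsto 0

theorem tendsto_binom_mul_hmhs (n k : ℕ) (hn : 1 ≤ n) (hk : 1 ≤ k) :
    Filter.Tendsto (fun α : ℂ => (poch α n / (n.factorial : ℂ)) * hmhs α n k)
      (nhdsWithin 0 {(0 : ℂ)}ᶜ)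
      (nhds (hmhs 1 (n - 1) (k - 1) / (n : ℂ))) := by
  obtain ⟨m, rfl⟩ : ∃ m, n = m + 1 := ⟨n - 1, by omega⟩
  obtain ⟨k', rfl⟩ : ∃ k', k = k' + 1 := ⟨k - 1, by omega⟩
  simp only [Nat.add_sub_cancel]
  set q : ℂ → ℂ := fun α => ∏ i ∈ Finset.range m, (α + ((i : ℂ) + 1)) with hq
  -- the regularized function
  set g : ℂ → ℂ := fun α =>
    (poch α (m+1) / ((m+1).factorial : ℂ)) * hmhs (α+1) m (k'+1)
      + (q α / ((m+1).factorial : ℂ)) * hmhs (α+1) m k' with hgdef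
  have hfac : ((m+1).factorial : ℂ) ≠ 0 := Nat.cast_ne_zero.mpr (m+1).factorial_ne_zero
  have hqcont : Continuous q := by
    apply continuous_finset_prod
    intro i _
    fun_prop
  have hpcont : Continuous (fun α : ℂ => poch α (m+1)) := by
    apply continuous_finset_prod
    intro i _
    fun_prop
  have hp0 : poch 0 (m+1) = 0 := by
    apply Finset.prod_eq_zero (Finset.mem_range.mpr (Nat.succ_pos m))
    simp
  have hq0 : q 0 = (m.factorial : ℂ) := by
    rw [hq]
    simp only [zero_add]
    rw [← Finset.prod_range_add_one_eq_factorial, Nat.cast_prod]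
    apply Finset.prod_congr rfl
    intro i _
    push_cast
    ring
  have hg : Filter.Tendsto g (nhds 0) (nhds (hmhs 1 m k' / ((m+1 : ℕ) : ℂ))) := by
    have h1 : Filter.Tendsto (fun α : ℂ => (poch α (m+1) / ((m+1).factorial : ℂ)) *
        hmhs (α+1) m (k'+1)) (nhds 0) (nhds ((poch 0 (m+1) / ((m+1).factorial : ℂ)) *
        hmhs 1 m (k'+1))) := by
      apply Filter.Tendsto.mul _ (by simpa using hmhs_tendsto (k'+1) m)
      exact ((hpcont.tendsto 0).div_const _)
    have h2 : Filter.Tendsto (fun α : ℂ => (q α / ((m+1).factorial : ℂ)) * hmhs (α+1) m k')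
        (nhds 0) (nhds ((q 0 / ((m+1).factorial : ℂ)) * hmhs 1 m k')) := by
      apply Filter.Tendsto.mul _ (by simpa using hmhs_tendsto k' m)
      exact ((hqcont.tendsto 0).div_const _)
    have := h1.add h2
    rw [hp0, hq0] at this
    convert this using 2
    rw [Nat.factorial_succ]
    push_cast
    have hmne : (m.factorial : ℂ) ≠ 0 := Nat.cast_ne_zero.mpr m.factorial_ne_zero
    have hmne2 : ((m : ℂ) + 1) ≠ 0 := by
      have := Nat.cast_ne_zero (R := ℂ).mpr (Nat.succ_ne_zero m)
      push_cast at this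
      exact this
    field_simp
    ring
  apply Filter.Tendsto.congr' _ (hg.mono_left nhdsWithin_le_nhds)
  filter_upwards [self_mem_nhdsWithin] with α hα
  have hαne : α ≠ 0 := hα
  rw [hgdef]
  simp only
  rw [hmhs_key k' m α]
  have hpoch : poch α (m+1) = α * q α := by
    rw [poch, Finset.prod_range_succ']
    simp only [Nat.cast_zero, add_zero]
    rw [mul_comm, hq]
    congr 1
    apply Finset.prod_congr rfl
    intro i _
    push_cast
    ring
  rw [hpoch]
  field_simp
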